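/- Let n ≥ 1 and let π be a 321-avoiding permutation of {1,…,n} which is not the identity, with excedance locations i_1 < i_2 < ⋯ < i_r. If for some j with 2 ≤ j ≤ r one has π(i_{j−1}) ≥ i_j, then π(x) < x for every index x with i_{j−1} < x < i_j; in particular π has no fixed point strictly between i_{j−1} and i_j. -/

import Mathlib

/-- A permutation `π` of `{1,…,n}` (modeled as `Fin n`) is 321-avoiding if there are no
indices `i < j < k` with `π k < π j < π i`. -/
def Avoids321 {n : ℕ} (π : Equiv.Perm (Fin n)) : Prop :=
  ∀ i j k : Fin n, i < j → j < k → ¬(π k < π j ∧ π j < π i)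

/-- Let `π` be a 321-avoiding permutation of `{1,…,n}` (so `1 ≤ n`), not the identity, with
excedance locations `i_1 < ⋯ < i_{r+1}` (here `ι 0, …, ι (Fin.last r)`).  If for some `j`
the consecutive excedance locations `i_{j−1} = ι j.castSucc` and `i_j = ι j.succ` satisfy
`π(i_{j−1}) ≥ i_j`, then `π x < x` for every index `x` with `i_{j−1} < x < i_j`; in
particular `π` has no fixed point strictly between `i_{j−1}` and `i_j`. -/
theorem stmt13 (n r : ℕ) (hn : 1 ≤ n) (π : Equiv.Perm (Fin n)) (h321 : Avoids321 π)
    (hne : π ≠ 1)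
    (ι : Fin (r + 1) → Fin n) (hmono : StrictMono ι)
    (hexc : ∀ x : Fin n, x < π x ↔ ∃ j, ι j = x)
    (j : Fin r) (hj : ι j.succ ≤ π (ι j.castSucc)) :
    (∀ x : Fin n, ι j.castSucc < x → x < ι j.succ → π x < x) ∧
    (∀ x : Fin n, ι j.castSucc < x → x < ι j.succ → π x ≠ x) := by
  have key : ∀ x : Fin n, ι j.castSucc < x → x < ι j.succ → π x < x := by
    intro x h1 h2
    have hne' : ¬ x < π x := by
      rw [hexc]
      rintro ⟨k, rfl⟩
      have hk1 : j.castSucc < k := hmono.lt_iff_lt.mp h1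
      have hk2 : k < j.succ := hmono.lt_iff_lt.mp h2
      simp [Fin.lt_iff_val_lt_val] at hk1 hk2
      omega
    have hle : π x ≤ x := not_lt.mp hne'
    rcases lt_or_eq_of_le hle with h | h
    · exact h
    · exfalso
      -- π x = x : fixed point, derive contradiction
      set S : Finset (Fin n) := Finset.univ.filter (fun y => π y < x) with hS
      have hcard : S.card = x.val := by
        have : S = (Finset.Iio x).map π.symm.toEmbedding := by
          ext y
          simp [hS, Finset.mem_map, Equiv.toEmbedding]
        rw [this, Finset.card_map, Fin.card_Iio]
      have hix : π (ι j.castSucc) ≥ ι j.succ := hj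
      have hπi : ¬ π (ι j.castSucc) < x := not_lt.mpr (le_of_lt (lt_of_lt_of_le h2 hj))
      by_cases hsub : S ⊆ Finset.Iio x
      · have heq : S = Finset.Iio x := by
          apply Finset.eq_of_subset_of_card_le hsub
          rw [hcard, Fin.card_Iio]
        have : ι j.castSucc ∈ S := by rw [heq]; simpa using h1
        simp [hS] at this
        exact hπi this
      · obtain ⟨k, hkS, hk⟩ := Finset.not_subset.mp hsub
        simp [hS] at hkS
        simp at hk
        have hxk : x < k := by
          rcases lt_or_eq_of_le hk with h' | h'
          · exact h'
          · exfalso; rw [← h', h] at hkS; exact lt_irrefl _ hkS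
        refine h321 (ι j.castSucc) x k h1 hxk ⟨?_, ?_⟩
        · rw [h]; exact hkS
        · rw [h]; exact lt_of_lt_of_le h2 hj
  exact ⟨key, fun x h1 h2 => (key x h1 h2).ne⟩
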